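/- In a Clifford algebra with n ≡ 0 mod 4, the element T = 1 + 2 e_{1…n} is invertible, lies in Q′ but not Q: reverse(T)·T = 1 + 4(e_{1…n})² + 4 e_{1…n} ∈ (C^0 ⊕ C^n)^× but not in Z^× = C^{×0}. Hence Q ≠ Q′ for n ≡ 0 mod 4. -/

import Mathlib

open CliffordAlgebra

noncomputable section

variable {n : ℕ} (Q : QuadraticForm ℝ (Fin n → ℝ))

/-- The standard generators `e_a` of the Clifford algebra. -/
def egen (a : Fin n) : CliffordAlgebra Q := ι Q (Pi.single a 1)

/-- The ordered product of generators indexed by a finite set. -/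
def eProd (s : Finset (Fin n)) : CliffordAlgebra Q :=
  ((s.sort (· ≤ ·)).map (egen Q)).prod

/-- The grade-`k` subspace `C^k`, spanned by the products of `k` distinct generators. -/
def gradeSubmodule (k : ℕ) : Submodule ℝ (CliffordAlgebra Q) :=
  Submodule.span ℝ {x | ∃ s : Finset (Fin n), s.card = k ∧ x = eProd Q s}

/-- The set `Z^× (C^{×(0)} ∪ C^{×(1)})` : invertible central elements times
invertible even or odd elements. -/
def Pset : Set (CliffordAlgebra Q) :=
  {T | ∃ W T₀ : CliffordAlgebra Q,
    W ∈ Subalgebra.center ℝ (CliffordAlgebra Q) ∧ IsUnit W ∧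
    (T₀ ∈ evenOdd Q 0 ∨ T₀ ∈ evenOdd Q 1) ∧ IsUnit T₀ ∧ T = W * T₀}

/-- `Q` is diagonal with entries `±1` in the standard basis (an orthonormal-type basis,
expressing nondegeneracy of `Q`). -/
def DiagQ : Prop :=
  (∀ a, Q (Pi.single a 1) = 1 ∨ Q (Pi.single a 1) = -1) ∧
  (∀ a b : Fin n, a ≠ b → QuadraticMap.polar Q (Pi.single a 1) (Pi.single b 1) = 0)

section Helpers
variable {Q}

lemma egen_sq (a : Fin n) :
    egen Q a * egen Q a = algebraMap ℝ _ (Q (Pi.single a 1)) := ι_sq_scalar Q _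
lemma reverse_egen (a : Fin n) : reverse (Q := Q) (egen Q a) = egen Q a := reverse_ι _
lemma egen_anticomm (hQ : DiagQ Q) {a b : Fin n} (h : a ≠ b) :
    egen Q a * egen Q b = -(egen Q b * egen Q a) := by
  have h2 := ι_mul_ι_add_swap (Q := Q) (Pi.single a 1) (Pi.single b 1)
  rw [hQ.2 a b h, map_zero] at h2
  exact eq_neg_of_add_eq_zero_left h2
lemma egen_move (hQ : DiagQ Q) {a : Fin n} {l : List (Fin n)} (ha : a ∉ l) :
    (l.map (egen Q)).prod * egen Q a
      = ((-1 : ℝ) ^ l.length) • (egen Q a * (l.map (egen Q)).prod) := by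
  induction l with
  | nil => simp
  | cons b l ih =>
    have hab : a ≠ b := fun h => ha (h ▸ (List.mem_cons_self : b ∈ b :: l))
    have hal : a ∉ l := fun h => ha (List.mem_cons_of_mem _ h)
    simp only [List.map_cons, List.prod_cons, List.length_cons]
    rw [mul_assoc, ih hal, mul_smul_comm, ← mul_assoc, egen_anticomm hQ hab.symm,
      neg_mul, mul_assoc, smul_neg, ← neg_smul]
    rw [pow_succ, mul_comm ((-1:ℝ)^l.length) (-1)]
    rw [mul_smul, neg_one_smul, neg_smul]
lemma eprod_sq (hQ : DiagQ Q) {l : List (Fin n)} (hl : l.Nodup) :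
    (l.map (egen Q)).prod * (l.map (egen Q)).prod
      = ((-1 : ℝ) ^ (l.length.choose 2))
          • algebraMap ℝ (CliffordAlgebra Q) ((l.map fun a => Q (Pi.single a 1)).prod) := by
  induction l with
  | nil => simp
  | cons a l ih =>
    obtain ⟨hal, hl'⟩ := List.nodup_cons.mp hl
    simp only [List.map_cons, List.prod_cons, List.length_cons]
    set P := (l.map (egen Q)).prod with hP
    calc egen Q a * P * (egen Q a * P)
        = egen Q a * (P * egen Q a) * P := by noncomm_ring
      _ = egen Q a * (((-1 : ℝ) ^ l.length) • (egen Q a * P)) * P := by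
          rw [egen_move hQ hal]
      _ = ((-1 : ℝ) ^ l.length) • ((egen Q a * egen Q a) * (P * P)) := by
          rw [mul_smul_comm, smul_mul_assoc]; congr 1; noncomm_ring
      _ = ((-1 : ℝ) ^ l.length) • (algebraMap ℝ (CliffordAlgebra Q) (Q (Pi.single a 1)) *
            (((-1 : ℝ) ^ (l.length.choose 2)) •
              algebraMap ℝ (CliffordAlgebra Q) ((l.map fun a => Q (Pi.single a 1)).prod))) := by
          rw [egen_sq, ih hl']
      _ = ((-1 : ℝ) ^ ((l.length + 1).choose 2)) •
            algebraMap ℝ (CliffordAlgebra Q)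
              (Q (Pi.single a 1) * (l.map fun a => Q (Pi.single a 1)).prod) := by
          rw [mul_smul_comm, smul_smul, ← pow_add, ← map_mul]
          congr 2
          rw [Nat.choose_succ_succ]
          simp [Nat.add_comm]
lemma eprod_reverse (hQ : DiagQ Q) {l : List (Fin n)} (hl : l.Nodup) :
    reverse (Q := Q) (l.map (egen Q)).prod
      = ((-1 : ℝ) ^ (l.length.choose 2)) • (l.map (egen Q)).prod := by
  induction l with
  | nil => simp
  | cons a l ih =>
    obtain ⟨hal, hl'⟩ := List.nodup_cons.mp hl
    simp only [List.map_cons, List.prod_cons, List.length_cons]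
    rw [reverse.map_mul, ih hl', reverse_egen, smul_mul_assoc, egen_move hQ hal,
      smul_smul, ← pow_add]
    congr 1
    rw [Nat.choose_succ_succ]
    simp [Nat.add_comm]
lemma eprod_grade (l : List (Fin n)) :
    (l.map (egen Q)).prod ∈ evenOdd Q (l.length : ZMod 2) := by
  induction l with
  | nil => simpa using Submodule.one_le.mp (one_le_evenOdd_zero Q)
  | cons a l ih =>
    simp only [List.map_cons, List.prod_cons, List.length_cons]
    have := SetLike.mul_mem_graded (ι_mem_evenOdd_one Q (Pi.single a 1)) ih
    have hcast : ((l.length + 1 : ℕ) : ZMod 2) = 1 + (l.length : ZMod 2) := by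
      push_cast; ring
    rw [hcast]
    exact this
lemma isUnit_of_mul_scalar {u v : CliffordAlgebra Q} {k : ℝ}
    (h : u * v = algebraMap ℝ _ k) (h' : v * u = algebraMap ℝ _ k) (hk : k ≠ 0) :
    IsUnit u := by
  refine isUnit_iff_exists.2 ⟨k⁻¹ • v, ?_, ?_⟩
  · rw [mul_smul_comm, h, Algebra.smul_def, ← map_mul, inv_mul_cancel₀ hk, map_one]
  · rw [smul_mul_assoc, h', Algebra.smul_def, ← map_mul, inv_mul_cancel₀ hk, map_one]
lemma prod_pm (hQ : DiagQ Q) (l : List (Fin n)) :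
    (l.map fun a => Q (Pi.single a 1)).prod = 1 ∨
      (l.map fun a => Q (Pi.single a 1)).prod = -1 := by
  induction l with
  | nil => left; simp
  | cons a l ih =>
    simp only [List.map_cons, List.prod_cons]
    rcases hQ.1 a with h | h <;> rcases ih with h' | h' <;> rw [h, h'] <;> norm_num

end Helpers

/-- For `n ≡ 0 mod 4`, `n ≠ 0`, the element `T = 1 + 2 e_{1…n}` lies in `Q'` but not
in `Q`: its norm `reverse(T) * T = 1 + 4 (e_{1…n})² + 4 e_{1…n}` is an invertible
element of `C^0 ⊕ C^n` that is not central. Hence `Q ≠ Q'`. -/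
theorem stmt14 (hQ : DiagQ Q) (hn : n % 4 = 0) (hn0 : n ≠ 0) :
    let ω : CliffordAlgebra Q := eProd Q Finset.univ
    let T : CliffordAlgebra Q := 1 + 2 * ω
    IsUnit T ∧ T ∈ evenOdd Q 0 ∧
      reverse (Q := Q) T * T = 1 + 4 * ω ^ 2 + 4 * ω ∧
      reverse (Q := Q) T * T ∈ gradeSubmodule Q 0 ⊔ gradeSubmodule Q n ∧
      IsUnit (reverse (Q := Q) T * T) ∧
      reverse (Q := Q) T * T ∉ Subalgebra.center ℝ (CliffordAlgebra Q) := by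
  obtain ⟨k, rfl⟩ : ∃ k, n = k + 1 := ⟨n - 1, by omega⟩
  intro ω T
  set A := algebraMap ℝ (CliffordAlgebra Q) with hA
  have hω : ω = ((List.finRange (k+1)).map (egen Q)).prod := by
    show eProd Q Finset.univ = _
    rw [eProd, Fin.sort_univ]
  have hnodup := List.nodup_finRange (k+1)
  have hlen : (List.finRange (k+1)).length = k+1 := List.length_finRange
  -- sign is +1
  have hchoose : Even ((k+1).choose 2) := by
    obtain ⟨m, hm⟩ : ∃ m, k + 1 = 4 * m := ⟨(k+1)/4, by omega⟩
    rw [Nat.choose_two_right, hm]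
    have h2 : 4*m*(4*m-1) = 2*(2*m*(4*m-1)) := by ring
    rw [h2, Nat.mul_div_cancel_left _ (by norm_num : 0 < 2)]
    exact ⟨m*(4*m-1), by ring⟩
  have hsign : ((-1:ℝ) ^ ((k+1).choose 2)) = 1 := hchoose.neg_one_pow
  set c : ℝ := ((List.finRange (k+1)).map fun a => Q (Pi.single a 1)).prod with hcdef
  have hc : c = 1 ∨ c = -1 := prod_pm hQ _
  have hc0 : c ≠ 0 := by rcases hc with h | h <;> rw [h] <;> norm_num
  have hωω : ω * ω = A c := by
    rw [hω, eprod_sq hQ hnodup, hlen, hsign, one_smul]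
  have hω2 : ω ^ 2 = A c := by rw [sq, hωω]
  have hrevω : reverse (Q := Q) ω = ω := by
    rw [hω, eprod_reverse hQ hnodup, hlen, hsign, one_smul]
  have h2ω : (2 : CliffordAlgebra Q) * ω = (2:ℝ) • ω := by
    rw [Algebra.smul_def, map_ofNat]
  have hrevT : reverse (Q := Q) T = T := by
    show reverse (Q := Q) (1 + 2 * ω) = 1 + 2 * ω
    rw [h2ω, map_add, reverse.map_one, map_smul, hrevω]
  -- the key product identity
  have h3 : reverse (Q := Q) T * T = 1 + 4 * ω ^ 2 + 4 * ω := by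
    rw [hrevT]
    show (1 + 2 * ω) * (1 + 2 * ω) = 1 + 4 * ω ^ 2 + 4 * ω
    noncomm_ring
  -- units
  have hTunit : IsUnit T := by
    have e1 : T * (1 - 2*ω) = A (1 - 4*c) := by
      show (1 + 2*ω) * (1 - 2*ω) = _
      have : (1 + 2*ω) * (1 - 2*ω) = 1 - 4*(ω*ω) := by noncomm_ring
      rw [this, hωω, map_sub, map_one, map_mul, map_ofNat]
    have e2 : (1 - 2*ω) * T = A (1 - 4*c) := by
      show (1 - 2*ω) * (1 + 2*ω) = _
      have : (1 - 2*ω) * (1 + 2*ω) = 1 - 4*(ω*ω) := by noncomm_ring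
      rw [this, hωω, map_sub, map_one, map_mul, map_ofNat]
    exact isUnit_of_mul_scalar e1 e2 (by rcases hc with h | h <;> rw [h] <;> norm_num)
  have hωmem : ω ∈ evenOdd Q 0 := by
    have hg := eprod_grade (Q := Q) (List.finRange (k+1))
    rw [hlen] at hg
    have h0 : (((k+1) : ℕ) : ZMod 2) = 0 :=
      (ZMod.natCast_eq_zero_iff (k+1) 2).2 (by omega)
    rw [h0] at hg
    rwa [hω]
  have hTmem : T ∈ evenOdd Q 0 := by
    show (1 : CliffordAlgebra Q) + 2 * ω ∈ evenOdd Q 0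
    refine add_mem (Submodule.one_le.mp (one_le_evenOdd_zero Q)) ?_
    rw [h2ω]
    exact Submodule.smul_mem _ _ hωmem
  -- grade membership
  have h1g : (1 : CliffordAlgebra Q) ∈ gradeSubmodule Q 0 :=
    Submodule.subset_span ⟨∅, by simp, by rw [eProd, Finset.sort_empty]; rfl⟩
  have hωg : ω ∈ gradeSubmodule Q (k+1) :=
    Submodule.subset_span ⟨Finset.univ, by simp, rfl⟩
  have hsup : reverse (Q := Q) T * T ∈ gradeSubmodule Q 0 ⊔ gradeSubmodule Q (k+1) := by
    rw [h3, hω2]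
    have ha : (1 : CliffordAlgebra Q) + 4 * A c ∈ gradeSubmodule Q 0 := by
      have : (1 : CliffordAlgebra Q) + 4 * A c = (1 + 4*c) • (1 : CliffordAlgebra Q) := by
        rw [Algebra.smul_def, mul_one, map_add, map_one, map_mul, map_ofNat]
      rw [this]
      exact Submodule.smul_mem _ _ h1g
    have hb : (4 : CliffordAlgebra Q) * ω ∈ gradeSubmodule Q (k+1) := by
      have : (4 : CliffordAlgebra Q) * ω = (4:ℝ) • ω := by rw [Algebra.smul_def, map_ofNat]
      rw [this]
      exact Submodule.smul_mem _ _ hωg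
    exact Submodule.add_mem_sup ha hb
  -- IsUnit (reverse T * T)
  have hScomm : ω * A c = A c * ω := (Algebra.commutes c ω).symm
  have hSunit : IsUnit (reverse (Q := Q) T * T) := by
    rw [h3, hω2]
    have key : (1 + 4*(A c) + 4*ω) * (1 + 4*(A c) - 4*ω)
        = 1 + 8*(A c) + 16*(A c * A c) - 16*(ω*ω) + 16*(ω*(A c) - (A c)*ω) := by noncomm_ring
    have key' : (1 + 4*(A c) - 4*ω) * (1 + 4*(A c) + 4*ω)
        = 1 + 8*(A c) + 16*(A c * A c) - 16*(ω*ω) + 16*((A c)*ω - ω*(A c)) := by noncomm_ring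
    rw [hScomm, sub_self, mul_zero, add_zero, hωω] at key key'
    have hval : A (1 + 8*c + 16*(c*c) - 16*c)
        = 1 + 8*(A c) + 16*(A c * A c) - 16*(A c) := by
      simp only [map_sub, map_add, map_mul, map_one, map_ofNat]
    rw [← hval] at key key'
    exact isUnit_of_mul_scalar key key'
      (by rcases hc with h | h <;> rw [h] <;> norm_num)
  -- anticommutation with e₀
  have hsplit : List.finRange (k+1) = 0 :: (List.finRange k).map Fin.succ :=
    List.finRange_succ
  set P := (((List.finRange k).map Fin.succ).map (egen Q)).prod with hPdef
  have h0P : (0 : Fin (k+1)) ∉ (List.finRange k).map Fin.succ := by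
    simp [Fin.succ_ne_zero]
  have hωP : ω = egen Q 0 * P := by
    rw [hω, hsplit, List.map_cons, List.prod_cons]
  have hmove := egen_move hQ h0P
  rw [List.length_map, List.length_finRange] at hmove
  have hkodd : Odd k := ⟨(k-1)/2, by omega⟩
  have hkpow : ((-1:ℝ) ^ k) = -1 := hkodd.neg_one_pow
  have hanti : ω * egen Q 0 = -(egen Q 0 * ω) := by
    rw [hωP, mul_assoc, hmove, hkpow, neg_one_smul, mul_neg]
  have he0unit : IsUnit (egen Q 0) := by
    refine isUnit_of_mul_scalar (egen_sq 0) (egen_sq 0) ?_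
    rcases hQ.1 0 with h | h <;> rw [h] <;> norm_num
  have hωunit : IsUnit ω := isUnit_of_mul_scalar hωω hωω hc0
  have hnc : reverse (Q := Q) T * T ∉ Subalgebra.center ℝ (CliffordAlgebra Q) := by
    intro hcen
    rw [Subalgebra.mem_center_iff] at hcen
    have h := hcen (egen Q 0)
    rw [h3, hω2] at h
    have hcomm0 : egen Q 0 * A c = A c * egen Q 0 := (Algebra.commutes c _).symm
    have hiden : 4*(egen Q 0 * ω) - 4*(ω * egen Q 0)
        = (egen Q 0 * (1 + 4*(A c) + 4*ω) - (1 + 4*(A c) + 4*ω) * egen Q 0)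
          + 4*(A c * egen Q 0 - egen Q 0 * A c) := by noncomm_ring
    rw [h, sub_self, zero_add, hcomm0, sub_self, mul_zero] at hiden
    rw [hanti, mul_neg, sub_neg_eq_add] at hiden
    have h8 : (8:ℝ) • (egen Q 0 * ω) = 0 := by
      rw [Algebra.smul_def, map_ofNat]
      have : (8 : CliffordAlgebra Q) * (egen Q 0 * ω)
          = 4*(egen Q 0 * ω) + 4*(egen Q 0 * ω) := by noncomm_ring
      rw [this, hiden]
    have hzero : egen Q 0 * ω = 0 :=
      (smul_eq_zero.mp h8).resolve_left (by norm_num)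
    exact (he0unit.mul hωunit).ne_zero hzero
  exact ⟨hTunit, hTmem, h3, hsup, hSunit, hnc⟩
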